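/- For n ≥ m ≥ 3 with n > 2(m−1), the m-degree of the total graph T(S_n □ S_m) equals 2m + n + 1. -/

import Mathlib

open SimpleGraph

/-- The star graph with a central vertex `0` and `n` leaves. -/
def starGraph (n : ℕ) : SimpleGraph (Fin (n+1)) where
  Adj u v := u ≠ v ∧ (u = 0 ∨ v = 0)
  symm := by
    constructor
    intro u v h
    exact ⟨h.1.symm, h.2.symm⟩
  loopless := by
    constructor
    intro u h
    exact h.1 rfl

/-- A proper coloring with `k` colors which is a b-coloring: every color class
contains a vertex adjacent to at least one vertex of every other color class. -/
def IsBColoring {V : Type*} (G : SimpleGraph V) (k : ℕ) (c : V → Fin k) : Prop :=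
  (∀ u v, G.Adj u v → c u ≠ c v) ∧
    ∀ i : Fin k, ∃ v, c v = i ∧ ∀ j : Fin k, j ≠ i → ∃ u, G.Adj v u ∧ c u = j

/-- `G` admits a b-coloring with `k` colors. -/
def HasBColoring {V : Type*} (G : SimpleGraph V) (k : ℕ) : Prop :=
  ∃ c : V → Fin k, IsBColoring G k c

/-- The set of `k` such that `G` has a b-coloring with `k` colors.  The
b-chromatic number of `G` is the greatest element of this set. -/
def bChromaticSet {V : Type*} (G : SimpleGraph V) : Set ℕ :=
  {k | HasBColoring G k}

/-- The set of `i` such that `G` has at least `i` vertices of degree at least `i - 1`.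
The m-degree of `G` is the greatest element of this set. -/
def mDegreeSet {V : Type*} (G : SimpleGraph V) : Set ℕ :=
  {i | ∃ S : Set V, S.Finite ∧ S.ncard = i ∧ ∀ v ∈ S, i - 1 ≤ (G.neighborSet v).ncard}

/-- The line graph of `G`: vertices are the edges of `G`, two being adjacent iff
they are distinct and share an endpoint. -/
def lineGraph {V : Type*} (G : SimpleGraph V) : SimpleGraph G.edgeSet where
  Adj e f := e ≠ f ∧ ∃ v, v ∈ (e : Sym2 V) ∧ v ∈ (f : Sym2 V)
  symm := by
    constructor
    rintro e f ⟨hne, v, hv1, hv2⟩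
    exact ⟨hne.symm, v, hv2, hv1⟩
  loopless := by
    constructor
    rintro e ⟨hne, -⟩
    exact hne rfl

/-- The total graph of `G`: vertices are `V(G) ⊕ E(G)`; adjacency is vertex
adjacency, vertex-edge incidence, or edge adjacency. -/
def totalGraph {V : Type*} (G : SimpleGraph V) : SimpleGraph (V ⊕ G.edgeSet) where
  Adj x y :=
    match x, y with
    | .inl u, .inl v => G.Adj u v
    | .inl u, .inr e => u ∈ (e : Sym2 V)
    | .inr e, .inl u => u ∈ (e : Sym2 V)
    | .inr e, .inr f => e ≠ f ∧ ∃ v, v ∈ (e : Sym2 V) ∧ v ∈ (f : Sym2 V)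
  symm := by
    constructor
    rintro (u | e) (v | f) h
    · exact h.symm
    · exact h
    · exact h
    · exact ⟨h.1.symm, h.2.choose, h.2.choose_spec.2, h.2.choose_spec.1⟩
  loopless := by
    constructor
    rintro (u | e) h
    · exact G.irrefl h
    · exact h.1 rfl

/-- The `p`-th power of `G`: same vertices, `u ~ v` iff `0 < d(u,v) ≤ p`. -/
def graphPower {V : Type*} (G : SimpleGraph V) (p : ℕ) : SimpleGraph V where
  Adj u v := 0 < G.dist u v ∧ G.dist u v ≤ p
  symm := by
    constructor
    intro u v h
    rwa [SimpleGraph.dist_comm]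
  loopless := by
    constructor
    intro u h
    simp [SimpleGraph.dist_self] at h

namespace MDegAux

open Sum Set

@[simp] lemma tg_inl_inl {V : Type*} (G : SimpleGraph V) (u v : V) :
    (totalGraph G).Adj (inl u) (inl v) ↔ G.Adj u v := Iff.rfl
@[simp] lemma tg_inl_inr {V : Type*} (G : SimpleGraph V) (u : V) (e : G.edgeSet) :
    (totalGraph G).Adj (inl u) (inr e) ↔ u ∈ (e : Sym2 V) := Iff.rfl
@[simp] lemma tg_inr_inl {V : Type*} (G : SimpleGraph V) (u : V) (e : G.edgeSet) :
    (totalGraph G).Adj (inr e) (inl u) ↔ u ∈ (e : Sym2 V) := Iff.rfl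
@[simp] lemma tg_inr_inr {V : Type*} (G : SimpleGraph V) (e f : G.edgeSet) :
    (totalGraph G).Adj (inr e) (inr f) ↔
      e ≠ f ∧ ∃ v, v ∈ (e : Sym2 V) ∧ v ∈ (f : Sym2 V) := Iff.rfl

lemma star_adj {k : ℕ} {u v : Fin (k+1)} :
    (_root_.starGraph k).Adj u v ↔ u ≠ v ∧ (u = 0 ∨ v = 0) := Iff.rfl

variable {n m : ℕ}

abbrev HG (n m : ℕ) : SimpleGraph (Fin (n+1) × Fin (m+1)) :=
  (_root_.starGraph n).boxProd (_root_.starGraph m)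

lemma adjH {b : Fin (m+1)} {a : Fin (n+1)} (ha : a ≠ 0) : (HG n m).Adj (0, b) (a, b) :=
  SimpleGraph.boxProd_adj.mpr (Or.inl ⟨⟨Ne.symm ha, Or.inl rfl⟩, rfl⟩)

lemma adjV {a : Fin (n+1)} {b : Fin (m+1)} (hb : b ≠ 0) : (HG n m).Adj (a, 0) (a, b) :=
  SimpleGraph.boxProd_adj.mpr (Or.inr ⟨⟨Ne.symm hb, Or.inl rfl⟩, rfl⟩)

def eA (n m : ℕ) (i : Fin n) : (HG n m).edgeSet :=
  ⟨s((0,0),(i.succ,0)), (HG n m).mem_edgeSet.mpr (adjH (Fin.succ_ne_zero i))⟩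
def eB (n m : ℕ) (j : Fin m) : (HG n m).edgeSet :=
  ⟨s((0,0),(0,j.succ)), (HG n m).mem_edgeSet.mpr (adjV (Fin.succ_ne_zero j))⟩

lemma ncard_le_of_range_subset {α β : Type*} [Finite α] {f : α → β} {s : Set β}
    (hf : Function.Injective f) (hs : Set.range f ⊆ s) (hfin : s.Finite) :
    Nat.card α ≤ s.ncard := by
  rw [← Nat.card_range_of_injective hf, Nat.card_coe_set_eq]
  exact Set.ncard_le_ncard hs hfin

lemma ncard_le_card_of_subset_range {α β : Type*} [Finite α] (f : α → β) {s : Set β}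
    (hs : s ⊆ Set.range f) : s.ncard ≤ Nat.card α := by
  have h1 : (Set.range f).ncard ≤ Nat.card α := by
    rw [← Nat.card_coe_set_eq]
    exact Nat.card_le_card_of_surjective (Set.rangeFactorization f) Set.rangeFactorization_surjective
  exact le_trans (Set.ncard_le_ncard hs (Set.finite_range f)) h1

lemma edge_cases (e : (HG n m).edgeSet) :
    (∃ a : Fin (n+1), a ≠ 0 ∧ (e : Sym2 (Fin (n+1) × Fin (m+1))) = s((0,0),(a,0))) ∨
    (∃ b : Fin (m+1), b ≠ 0 ∧ (e : Sym2 (Fin (n+1) × Fin (m+1))) = s((0,0),(0,b))) ∨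
    (∃ (a : Fin (n+1)) (b : Fin (m+1)), a ≠ 0 ∧ b ≠ 0 ∧ (e : Sym2 (Fin (n+1) × Fin (m+1))) = s((a,0),(a,b))) ∨
    (∃ (a : Fin (n+1)) (b : Fin (m+1)), a ≠ 0 ∧ b ≠ 0 ∧ (e : Sym2 (Fin (n+1) × Fin (m+1))) = s((0,b),(a,b))) := by
  obtain ⟨e, he⟩ := e
  revert he
  induction e using Sym2.ind with
  | _ p q =>
    intro he
    rw [SimpleGraph.mem_edgeSet] at he
    obtain ⟨a, b⟩ := p; obtain ⟨a', b'⟩ := q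
    rw [SimpleGraph.boxProd_adj] at he
    simp only [star_adj] at he
    rcases he with ⟨⟨hne, h0⟩, rfl⟩ | ⟨⟨hne, h0⟩, rfl⟩
    · -- b' = b, star adj between a and a'
      rcases h0 with rfl | rfl
      · rcases eq_or_ne b 0 with rfl | hb
        · exact Or.inl ⟨a', Ne.symm hne, rfl⟩
        · exact Or.inr (Or.inr (Or.inr ⟨a', b, Ne.symm hne, hb, rfl⟩))
      · rcases eq_or_ne b 0 with rfl | hb
        · exact Or.inl ⟨a, hne, Sym2.eq_swap⟩
        · exact Or.inr (Or.inr (Or.inr ⟨a, b, hne, hb, Sym2.eq_swap⟩))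
    · -- a' = a, star adj between b and b'
      rcases h0 with rfl | rfl
      · rcases eq_or_ne a 0 with rfl | ha
        · exact Or.inr (Or.inl ⟨b', Ne.symm hne, rfl⟩)
        · exact Or.inr (Or.inr (Or.inl ⟨a, b', ha, Ne.symm hne, rfl⟩))
      · rcases eq_or_ne a 0 with rfl | ha
        · exact Or.inr (Or.inl ⟨b, hne, Sym2.eq_swap⟩)
        · exact Or.inr (Or.inr (Or.inl ⟨a, b, ha, hne, Sym2.eq_swap⟩))

def eH (n m : ℕ) (b : Fin (m+1)) (i : Fin n) : (HG n m).edgeSet :=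
  ⟨s((0,b),(i.succ,b)), (HG n m).mem_edgeSet.mpr (adjH (Fin.succ_ne_zero i))⟩
def eV (n m : ℕ) (a : Fin (n+1)) (j : Fin m) : (HG n m).edgeSet :=
  ⟨s((a,0),(a,j.succ)), (HG n m).mem_edgeSet.mpr (adjV (Fin.succ_ne_zero j))⟩

lemma lb1 : n + (m + m) ≤ ((totalGraph (HG n m)).neighborSet (Sum.inl (0,0))).ncard := by
  classical
  set f : Fin n ⊕ Fin m ⊕ Fin m → (Fin (n+1) × Fin (m+1)) ⊕ (HG n m).edgeSet :=
    Sum.elim (fun i => Sum.inl (i.succ, 0))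
      (Sum.elim (fun j => Sum.inl (0, j.succ)) (fun j => Sum.inr (eB n m j))) with hf
  have hinj : Function.Injective f := by
    intro x y hxy
    rcases x with i|j|j <;> rcases y with i'|j'|j' <;>
      simp_all [hf, eB, Prod.ext_iff, Sym2.eq_iff, Subtype.ext_iff, Fin.ext_iff, Fin.val_succ]
  have hsub : Set.range f ⊆ (totalGraph (HG n m)).neighborSet (Sum.inl (0,0)) := by
    rintro x ⟨(i|j|j), rfl⟩
    · exact adjH (Fin.succ_ne_zero i)
    · exact adjV (Fin.succ_ne_zero j)
    · show ((0:Fin (n+1)), (0:Fin (m+1))) ∈ (eB n m j : Sym2 _)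
      simp [eB]
  have key := ncard_le_of_range_subset hinj hsub (Set.toFinite _)
  simpa using key

lemma lb2 {b : Fin (m+1)} (hb : b ≠ 0) :
    n + n + (1 + 1) ≤ ((totalGraph (HG n m)).neighborSet (Sum.inl (0, b))).ncard := by
  classical
  set f : (Fin n ⊕ Fin n) ⊕ (Unit ⊕ Unit) → (Fin (n+1) × Fin (m+1)) ⊕ (HG n m).edgeSet :=
    Sum.elim
      (Sum.elim (fun i => Sum.inl (i.succ, b)) (fun i => Sum.inr (eH n m b i)))
      (Sum.elim (fun _ => Sum.inl (0, 0))
        (fun _ => Sum.inr ⟨s((0,0),(0,b)), (HG n m).mem_edgeSet.mpr (adjV hb)⟩)) with hf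
  have hinj : Function.Injective f := by
    intro x y hxy
    rcases x with (i|i)|(u|u) <;> rcases y with (i'|i')|(u'|u') <;>
      simp_all [hf, eH, Prod.ext_iff, Sym2.eq_iff, Subtype.ext_iff, Fin.ext_iff, Fin.val_succ]
  have hsub : Set.range f ⊆ (totalGraph (HG n m)).neighborSet (Sum.inl (0, b)) := by
    rintro x ⟨((i|i)|(u|u)), rfl⟩
    · exact adjH (Fin.succ_ne_zero i)
    · show ((0:Fin (n+1)), b) ∈ (eH n m b i : Sym2 _)
      simp [eH]
    · exact (adjV hb).symm
    · show ((0:Fin (n+1)), b) ∈ (s((0,0),(0,b)) : Sym2 _)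
      simp
  have key := ncard_le_of_range_subset hinj hsub (Set.toFinite _)
  simpa using key

lemma lb5 (E : (HG n m).edgeSet) {a : Fin (n+1)} (ha : a ≠ 0)
    (hE : (E : Sym2 (Fin (n+1) × Fin (m+1))) = s((0,0),(a,0))) :
    m + m + n ≤ ((totalGraph (HG n m)).neighborSet (Sum.inr E)).ncard := by
  classical
  set f : (Fin m ⊕ Fin m) ⊕ Fin n → (Fin (n+1) × Fin (m+1)) ⊕ (HG n m).edgeSet :=
    Sum.elim
      (Sum.elim (fun j => Sum.inr (eB n m j)) (fun j => Sum.inr (eV n m a j)))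
      (fun i => if i.succ = a then Sum.inl (a, 0) else Sum.inr (eA n m i)) with hf
  have hinj : Function.Injective f := by
    intro x y hxy
    rcases x with (j|j)|i <;> rcases y with (j'|j')|i' <;>
      simp only [hf, Sum.elim_inl, Sum.elim_inr] at hxy <;>
      [skip; skip; skip; skip; skip; skip; skip; skip; skip] <;>
      first
        | (split_ifs at hxy with h1 h2 <;>
            simp_all [eA, eB, eV, Prod.ext_iff, Sym2.eq_iff, Subtype.ext_iff, Fin.ext_iff, -Fin.val_eq_zero_iff,
              Fin.val_succ] <;> omega)
        | (simp_all [eA, eB, eV, Prod.ext_iff, Sym2.eq_iff, Subtype.ext_iff, Fin.ext_iff, -Fin.val_eq_zero_iff,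
            Fin.val_succ])
  have hsub : Set.range f ⊆ (totalGraph (HG n m)).neighborSet (Sum.inr E) := by
    rintro x ⟨((j|j)|i), rfl⟩
    · refine ⟨?_, ((0:Fin (n+1)), (0:Fin (m+1))), ?_, ?_⟩
      · intro hEq
        rw [Subtype.ext_iff, hE] at hEq
        simp [eB, Sym2.eq_iff, Prod.ext_iff, Fin.ext_iff, -Fin.val_eq_zero_iff] at hEq
      · rw [hE]; simp
      · simp [eB]
    · refine ⟨?_, (a, (0:Fin (m+1))), ?_, ?_⟩
      · intro hEq
        rw [Subtype.ext_iff, hE] at hEq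
        have ha' : a.val ≠ 0 := fun hv => ha (Fin.ext hv)
        simp [eV, Sym2.eq_iff, Prod.ext_iff, Fin.ext_iff] at hEq
      · rw [hE]; simp
      · simp [eV]
    · show (totalGraph (HG n m)).Adj (Sum.inr E) _
      simp only [hf, Sum.elim_inl, Sum.elim_inr]
      split_ifs with hi
      · show (a, (0:Fin (m+1))) ∈ (E : Sym2 _)
        rw [hE]; simp
      · refine ⟨?_, ((0:Fin (n+1)), (0:Fin (m+1))), ?_, ?_⟩
        · intro hEq
          rw [Subtype.ext_iff, hE] at hEq
          have ha' : a.val ≠ 0 := fun hv => ha (Fin.ext hv)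
          have hi' : i.succ.val ≠ a.val := fun hv => hi (Fin.ext hv)
          simp only [Fin.val_succ] at hi'
          simp [eA, Sym2.eq_iff, Prod.ext_iff, Fin.ext_iff, -Fin.val_eq_zero_iff] at hEq
          try omega
        · rw [hE]; simp
        · simp [eA]
  have key := ncard_le_of_range_subset hinj hsub (Set.toFinite _)
  simpa using key

lemma lb6 (E : (HG n m).edgeSet) {b : Fin (m+1)} (hb : b ≠ 0)
    (hE : (E : Sym2 (Fin (n+1) × Fin (m+1))) = s((0,0),(0,b))) :
    n + n + m ≤ ((totalGraph (HG n m)).neighborSet (Sum.inr E)).ncard := by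
  classical
  set f : (Fin n ⊕ Fin n) ⊕ Fin m → (Fin (n+1) × Fin (m+1)) ⊕ (HG n m).edgeSet :=
    Sum.elim
      (Sum.elim (fun i => Sum.inr (eA n m i)) (fun i => Sum.inr (eH n m b i)))
      (fun j => if j.succ = b then Sum.inl (0, b) else Sum.inr (eB n m j)) with hf
  have hinj : Function.Injective f := by
    intro x y hxy
    rcases x with (j|j)|i <;> rcases y with (j'|j')|i' <;>
      simp only [hf, Sum.elim_inl, Sum.elim_inr] at hxy <;>
      first
        | (split_ifs at hxy with h1 h2 <;>
            simp_all [eA, eB, eH, Prod.ext_iff, Sym2.eq_iff, Subtype.ext_iff, Fin.ext_iff, -Fin.val_eq_zero_iff,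
              Fin.val_succ] <;> try omega)
        | (simp_all [eA, eB, eH, Prod.ext_iff, Sym2.eq_iff, Subtype.ext_iff, Fin.ext_iff, -Fin.val_eq_zero_iff,
            Fin.val_succ] <;> try omega)
  have hsub : Set.range f ⊆ (totalGraph (HG n m)).neighborSet (Sum.inr E) := by
    have hb' : b.val ≠ 0 := fun hv => hb (Fin.ext hv)
    rintro x ⟨((i|i)|j), rfl⟩
    · refine ⟨?_, ((0:Fin (n+1)), (0:Fin (m+1))), ?_, ?_⟩
      · intro hEq
        rw [Subtype.ext_iff, hE] at hEq
        simp [eA, Sym2.eq_iff, Prod.ext_iff, Fin.ext_iff, -Fin.val_eq_zero_iff] at hEq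
        try omega
      · rw [hE]; simp
      · simp [eA]
    · refine ⟨?_, ((0:Fin (n+1)), b), ?_, ?_⟩
      · intro hEq
        rw [Subtype.ext_iff, hE] at hEq
        simp [eH, Sym2.eq_iff, Prod.ext_iff, Fin.ext_iff] at hEq
        try omega
      · rw [hE]; simp
      · simp [eH]
    · show (totalGraph (HG n m)).Adj (Sum.inr E) _
      simp only [hf, Sum.elim_inl, Sum.elim_inr]
      split_ifs with hj
      · show ((0:Fin (n+1)), b) ∈ (E : Sym2 _)
        rw [hE]; simp
      · refine ⟨?_, ((0:Fin (n+1)), (0:Fin (m+1))), ?_, ?_⟩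
        · intro hEq
          rw [Subtype.ext_iff, hE] at hEq
          have hj' : j.succ.val ≠ b.val := fun hv => hj (Fin.ext hv)
          simp only [Fin.val_succ] at hj'
          simp [eB, Sym2.eq_iff, Prod.ext_iff, Fin.ext_iff, -Fin.val_eq_zero_iff] at hEq
          try omega
        · rw [hE]; simp
        · simp [eB]
  have key := ncard_le_of_range_subset hinj hsub (Set.toFinite _)
  simpa using key

lemma ub3 {a : Fin (n+1)} (ha : a ≠ 0) :
    ((totalGraph (HG n m)).neighborSet (Sum.inl (a, 0))).ncard ≤ (m + 1) + m + (1 + 1) := by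
  classical
  set g : (Fin (m+1) ⊕ Fin m) ⊕ (Unit ⊕ Unit) → (Fin (n+1) × Fin (m+1)) ⊕ (HG n m).edgeSet :=
    Sum.elim
      (Sum.elim (fun q => Sum.inl (a, q)) (fun j => Sum.inr (eV n m a j)))
      (Sum.elim (fun _ => Sum.inl (0, 0))
        (fun _ => Sum.inr ⟨s((0,0),(a,0)), (HG n m).mem_edgeSet.mpr (adjH ha)⟩)) with hg
  have hsub : (totalGraph (HG n m)).neighborSet (Sum.inl (a, 0)) ⊆ Set.range g := by
    rintro (⟨p, q⟩ | F) hy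
    · have hy' : (HG n m).Adj (a, 0) (p, q) := hy
      rw [SimpleGraph.boxProd_adj] at hy'
      simp only [star_adj] at hy'
      rcases hy' with ⟨⟨hne, h0 | h0⟩, hq⟩ | ⟨⟨hne, h0 | h0⟩, hp⟩
      · exact absurd h0 ha
      · subst h0
        cases hq
        exact ⟨Sum.inr (Sum.inl ()), rfl⟩
      · -- a = p, q adjacent to 0 in star with 0 = 0? h0 : (0 : Fin (m+1)) = 0
        subst hp
        exact ⟨Sum.inl (Sum.inl q), rfl⟩
      · subst hp
        exact ⟨Sum.inl (Sum.inl q), rfl⟩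
    · have hy' : ((a, (0:Fin (m+1)))) ∈ (F : Sym2 _) := hy
      rcases edge_cases F with ⟨a', ha', hF⟩ | ⟨b', hb', hF⟩ | ⟨a', b', ha', hb', hF⟩ |
        ⟨a', b', ha', hb', hF⟩ <;> rw [hF, Sym2.mem_iff] at hy'
      · rcases hy' with h | h
        · exact absurd (Prod.ext_iff.mp h).1 ha
        · obtain ⟨h1, -⟩ := Prod.ext_iff.mp h
          subst h1
          exact ⟨Sum.inr (Sum.inr ()), congrArg Sum.inr (Subtype.ext hF.symm)⟩
      · rcases hy' with h | h
        · exact absurd (Prod.ext_iff.mp h).1 ha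
        · exact absurd (Prod.ext_iff.mp h).1 ha
      · rcases hy' with h | h
        · obtain ⟨h1, -⟩ := Prod.ext_iff.mp h
          subst h1
          obtain ⟨j, rfl⟩ := Fin.exists_succ_eq.mpr hb'
          exact ⟨Sum.inl (Sum.inr j), congrArg Sum.inr (Subtype.ext hF.symm)⟩
        · exact absurd (Prod.ext_iff.mp h).2.symm hb'
      · rcases hy' with h | h
        · exact absurd (Prod.ext_iff.mp h).2.symm hb'
        · exact absurd (Prod.ext_iff.mp h).2.symm hb'
  have key := ncard_le_card_of_subset_range g hsub
  simpa using key

lemma ub4 {a : Fin (n+1)} {b : Fin (m+1)} (ha : a ≠ 0) (hb : b ≠ 0) :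
    ((totalGraph (HG n m)).neighborSet (Sum.inl (a, b))).ncard ≤ 1 + 1 + (1 + 1) := by
  classical
  set g : (Unit ⊕ Unit) ⊕ (Unit ⊕ Unit) → (Fin (n+1) × Fin (m+1)) ⊕ (HG n m).edgeSet :=
    Sum.elim
      (Sum.elim (fun _ => Sum.inl (0, b)) (fun _ => Sum.inl (a, 0)))
      (Sum.elim (fun _ => Sum.inr ⟨s((a,0),(a,b)), (HG n m).mem_edgeSet.mpr (adjV hb)⟩)
        (fun _ => Sum.inr ⟨s((0,b),(a,b)), (HG n m).mem_edgeSet.mpr (adjH ha)⟩)) with hg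
  have hsub : (totalGraph (HG n m)).neighborSet (Sum.inl (a, b)) ⊆ Set.range g := by
    rintro (⟨p, q⟩ | F) hy
    · have hy' : (HG n m).Adj (a, b) (p, q) := hy
      rw [SimpleGraph.boxProd_adj] at hy'
      simp only [star_adj] at hy'
      rcases hy' with ⟨⟨hne, h0 | h0⟩, hq⟩ | ⟨⟨hne, h0 | h0⟩, hp⟩
      · exact absurd h0 ha
      · subst h0; cases hq
        exact ⟨Sum.inl (Sum.inl ()), rfl⟩
      · exact absurd h0 hb
      · subst h0; cases hp
        exact ⟨Sum.inl (Sum.inr ()), rfl⟩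
    · have hy' : ((a, b)) ∈ (F : Sym2 _) := hy
      rcases edge_cases F with ⟨a', ha', hF⟩ | ⟨b', hb', hF⟩ | ⟨a', b', ha', hb', hF⟩ |
        ⟨a', b', ha', hb', hF⟩ <;> rw [hF, Sym2.mem_iff] at hy'
      · rcases hy' with h | h
        · exact absurd (Prod.ext_iff.mp h).1 ha
        · exact absurd (Prod.ext_iff.mp h).2 hb
      · rcases hy' with h | h
        · exact absurd (Prod.ext_iff.mp h).1 ha
        · exact absurd (Prod.ext_iff.mp h).1 ha
      · rcases hy' with h | h
        · exact absurd (Prod.ext_iff.mp h).2 hb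
        · obtain ⟨h1, h2⟩ := Prod.ext_iff.mp h
          subst h1; subst h2
          exact ⟨Sum.inr (Sum.inl ()), congrArg Sum.inr (Subtype.ext hF.symm)⟩
      · rcases hy' with h | h
        · exact absurd (Prod.ext_iff.mp h).1 ha
        · obtain ⟨h1, h2⟩ := Prod.ext_iff.mp h
          subst h1; subst h2
          exact ⟨Sum.inr (Sum.inr ()), congrArg Sum.inr (Subtype.ext hF.symm)⟩
  have key := ncard_le_card_of_subset_range g hsub
  simpa using key

lemma ub7 (E : (HG n m).edgeSet) {a : Fin (n+1)} {b : Fin (m+1)} (ha : a ≠ 0) (hb : b ≠ 0)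
    (hE : (E : Sym2 (Fin (n+1) × Fin (m+1))) = s((a,0),(a,b))) :
    ((totalGraph (HG n m)).neighborSet (Sum.inr E)).ncard ≤ m + 1 + (1 + (1 + 1)) := by
  classical
  set g : (Fin m ⊕ Unit) ⊕ (Unit ⊕ (Unit ⊕ Unit)) →
      (Fin (n+1) × Fin (m+1)) ⊕ (HG n m).edgeSet :=
    Sum.elim
      (Sum.elim (fun j => Sum.inr (eV n m a j)) (fun _ => Sum.inl (a, 0)))
      (Sum.elim (fun _ => Sum.inl (a, b))
        (Sum.elim (fun _ => Sum.inr ⟨s((0,0),(a,0)), (HG n m).mem_edgeSet.mpr (adjH ha)⟩)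
          (fun _ => Sum.inr ⟨s((0,b),(a,b)), (HG n m).mem_edgeSet.mpr (adjH ha)⟩))) with hg
  have hsub : (totalGraph (HG n m)).neighborSet (Sum.inr E) ⊆ Set.range g := by
    rintro (u | F) hy
    · have hy' : u ∈ (E : Sym2 _) := hy
      rw [hE, Sym2.mem_iff] at hy'
      rcases hy' with rfl | rfl
      · exact ⟨Sum.inl (Sum.inr ()), rfl⟩
      · exact ⟨Sum.inr (Sum.inl ()), rfl⟩
    · obtain ⟨-, v, hvE, hvF⟩ := (hy : _ ∧ _)
      rw [hE, Sym2.mem_iff] at hvE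
      rcases edge_cases F with ⟨a', ha', hF⟩ | ⟨b', hb', hF⟩ | ⟨a', b', ha', hb', hF⟩ |
        ⟨a', b', ha', hb', hF⟩ <;> rw [hF, Sym2.mem_iff] at hvF <;>
        rcases hvE with rfl | rfl
      · rcases hvF with h | h
        · exact absurd (Prod.ext_iff.mp h).1 ha
        · obtain ⟨h1, -⟩ := Prod.ext_iff.mp h
          subst h1
          exact ⟨Sum.inr (Sum.inr (Sum.inl ())), congrArg Sum.inr (Subtype.ext hF.symm)⟩
      · rcases hvF with h | h
        · exact absurd (Prod.ext_iff.mp h).1 ha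
        · exact absurd (Prod.ext_iff.mp h).2 hb
      · rcases hvF with h | h
        · exact absurd (Prod.ext_iff.mp h).1 ha
        · exact absurd (Prod.ext_iff.mp h).1 ha
      · rcases hvF with h | h
        · exact absurd (Prod.ext_iff.mp h).1 ha
        · exact absurd (Prod.ext_iff.mp h).1 ha
      · rcases hvF with h | h
        · obtain ⟨h1, -⟩ := Prod.ext_iff.mp h
          subst h1
          obtain ⟨j, rfl⟩ := Fin.exists_succ_eq.mpr hb'
          exact ⟨Sum.inl (Sum.inl j), congrArg Sum.inr (Subtype.ext hF.symm)⟩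
        · exact absurd (Prod.ext_iff.mp h).2.symm hb'
      · rcases hvF with h | h
        · exact absurd (Prod.ext_iff.mp h).2 hb
        · obtain ⟨h1, h2⟩ := Prod.ext_iff.mp h
          subst h1; subst h2
          obtain ⟨j, rfl⟩ := Fin.exists_succ_eq.mpr hb
          exact ⟨Sum.inl (Sum.inl j), congrArg Sum.inr (Subtype.ext hF.symm)⟩
      · rcases hvF with h | h
        · exact absurd (Prod.ext_iff.mp h).2.symm hb'
        · exact absurd (Prod.ext_iff.mp h).2.symm hb'
      · rcases hvF with h | h
        · exact absurd (Prod.ext_iff.mp h).1 ha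
        · obtain ⟨h1, h2⟩ := Prod.ext_iff.mp h
          subst h1; subst h2
          exact ⟨Sum.inr (Sum.inr (Sum.inr ())), congrArg Sum.inr (Subtype.ext hF.symm)⟩
  have key := ncard_le_card_of_subset_range g hsub
  simpa using key

lemma ub8 (E : (HG n m).edgeSet) {a : Fin (n+1)} {b : Fin (m+1)} (ha : a ≠ 0) (hb : b ≠ 0)
    (hE : (E : Sym2 (Fin (n+1) × Fin (m+1))) = s((0,b),(a,b))) :
    ((totalGraph (HG n m)).neighborSet (Sum.inr E)).ncard ≤ n + 1 + (1 + (1 + 1)) := by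
  classical
  set g : (Fin n ⊕ Unit) ⊕ (Unit ⊕ (Unit ⊕ Unit)) →
      (Fin (n+1) × Fin (m+1)) ⊕ (HG n m).edgeSet :=
    Sum.elim
      (Sum.elim (fun i => Sum.inr (eH n m b i)) (fun _ => Sum.inl (0, b)))
      (Sum.elim (fun _ => Sum.inl (a, b))
        (Sum.elim (fun _ => Sum.inr ⟨s((0,0),(0,b)), (HG n m).mem_edgeSet.mpr (adjV hb)⟩)
          (fun _ => Sum.inr ⟨s((a,0),(a,b)), (HG n m).mem_edgeSet.mpr (adjV hb)⟩))) with hg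
  have hsub : (totalGraph (HG n m)).neighborSet (Sum.inr E) ⊆ Set.range g := by
    rintro (u | F) hy
    · have hy' : u ∈ (E : Sym2 _) := hy
      rw [hE, Sym2.mem_iff] at hy'
      rcases hy' with rfl | rfl
      · exact ⟨Sum.inl (Sum.inr ()), rfl⟩
      · exact ⟨Sum.inr (Sum.inl ()), rfl⟩
    · obtain ⟨-, v, hvE, hvF⟩ := (hy : _ ∧ _)
      rw [hE, Sym2.mem_iff] at hvE
      rcases edge_cases F with ⟨a', ha', hF⟩ | ⟨b', hb', hF⟩ | ⟨a', b', ha', hb', hF⟩ |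
        ⟨a', b', ha', hb', hF⟩ <;> rw [hF, Sym2.mem_iff] at hvF <;>
        rcases hvE with rfl | rfl
      · rcases hvF with h | h
        · exact absurd (Prod.ext_iff.mp h).2 hb
        · exact absurd (Prod.ext_iff.mp h).2 hb
      · rcases hvF with h | h
        · exact absurd (Prod.ext_iff.mp h).1 ha
        · exact absurd (Prod.ext_iff.mp h).2 hb
      · rcases hvF with h | h
        · exact absurd (Prod.ext_iff.mp h).2 hb
        · obtain ⟨-, h2⟩ := Prod.ext_iff.mp h
          subst h2
          exact ⟨Sum.inr (Sum.inr (Sum.inl ())), congrArg Sum.inr (Subtype.ext hF.symm)⟩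
      · rcases hvF with h | h
        · exact absurd (Prod.ext_iff.mp h).1 ha
        · exact absurd (Prod.ext_iff.mp h).1 ha
      · rcases hvF with h | h
        · exact absurd (Prod.ext_iff.mp h).1.symm ha'
        · exact absurd (Prod.ext_iff.mp h).1.symm ha'
      · rcases hvF with h | h
        · exact absurd (Prod.ext_iff.mp h).2 hb
        · obtain ⟨h1, h2⟩ := Prod.ext_iff.mp h
          subst h1; subst h2
          exact ⟨Sum.inr (Sum.inr (Sum.inr ())), congrArg Sum.inr (Subtype.ext hF.symm)⟩
      · rcases hvF with h | h
        · obtain ⟨-, h2⟩ := Prod.ext_iff.mp h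
          subst h2
          obtain ⟨i, rfl⟩ := Fin.exists_succ_eq.mpr ha'
          exact ⟨Sum.inl (Sum.inl i), congrArg Sum.inr (Subtype.ext hF.symm)⟩
        · exact absurd (Prod.ext_iff.mp h).1.symm ha'
      · rcases hvF with h | h
        · exact absurd (Prod.ext_iff.mp h).1 ha
        · obtain ⟨h1, h2⟩ := Prod.ext_iff.mp h
          subst h1; subst h2
          obtain ⟨i, rfl⟩ := Fin.exists_succ_eq.mpr ha
          exact ⟨Sum.inl (Sum.inl i), congrArg Sum.inr (Subtype.ext hF.symm)⟩
  have key := ncard_le_card_of_subset_range g hsub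
  simpa using key

def bigF (n m : ℕ) : (Unit ⊕ Fin m) ⊕ (Fin n ⊕ Fin m) →
    (Fin (n+1) × Fin (m+1)) ⊕ (HG n m).edgeSet :=
  Sum.elim
    (Sum.elim (fun _ => Sum.inl (0,0)) (fun j => Sum.inl (0, j.succ)))
    (Sum.elim (fun i => Sum.inr (eA n m i)) (fun j => Sum.inr (eB n m j)))

lemma bigF_inj : Function.Injective (bigF n m) := by
  intro x y hxy
  rcases x with (u|j)|(i|j) <;> rcases y with (u'|j')|(i'|j') <;>
    simp_all [bigF, eA, eB, Prod.ext_iff, Sym2.eq_iff, Subtype.ext_iff, Fin.ext_iff,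
      Fin.val_succ]

lemma bigF_card : (Set.range (bigF n m)).ncard = 2 * m + n + 1 := by
  rw [← Nat.card_coe_set_eq, Nat.card_range_of_injective bigF_inj]
  simp [Nat.card_sum]
  omega

theorem main (n m : ℕ) (hm : 3 ≤ m) (hmn : m ≤ n) (h : 2 * (m - 1) < n) :
    IsGreatest (mDegreeSet (totalGraph ((_root_.starGraph n).boxProd (_root_.starGraph m))))
      (2 * m + n + 1) := by
  show IsGreatest (mDegreeSet (totalGraph (HG n m))) (2 * m + n + 1)
  constructor
  · refine ⟨Set.range (bigF n m), Set.toFinite _, bigF_card, ?_⟩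
    rintro v ⟨((u|j)|(i|j)), rfl⟩
    · have := lb1 (n := n) (m := m)
      simp only [bigF, Sum.elim_inl, Sum.elim_inr]
      omega
    · have := lb2 (n := n) (m := m) (Fin.succ_ne_zero j)
      simp only [bigF, Sum.elim_inl, Sum.elim_inr]
      omega
    · have := lb5 (eA n m i) (Fin.succ_ne_zero i) rfl
      simp only [bigF, Sum.elim_inl, Sum.elim_inr]
      omega
    · have := lb6 (eB n m j) (Fin.succ_ne_zero j) rfl
      simp only [bigF, Sum.elim_inl, Sum.elim_inr]
      omega
  · rintro i ⟨S, hSfin, hScard, hSdeg⟩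
    by_contra hlt
    push_neg at hlt
    have hSsub : S ⊆ Set.range (bigF n m) := by
      rintro (⟨a, b⟩ | E) hv
      · have hdeg := hSdeg _ hv
        by_cases ha : a = 0
        · subst ha
          by_cases hb : b = 0
          · subst hb
            exact ⟨Sum.inl (Sum.inl ()), rfl⟩
          · obtain ⟨j, rfl⟩ := Fin.exists_succ_eq.mpr hb
            exact ⟨Sum.inl (Sum.inr j), rfl⟩
        · exfalso
          by_cases hb : b = 0
          · subst hb
            have := ub3 (n := n) (m := m) ha
            omega
          · have := ub4 (n := n) (m := m) ha hb
            omega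
      · have hdeg := hSdeg _ hv
        rcases edge_cases E with ⟨a, ha, hE⟩ | ⟨b, hb, hE⟩ | ⟨a, b, ha, hb, hE⟩ |
          ⟨a, b, ha, hb, hE⟩
        · obtain ⟨i', rfl⟩ := Fin.exists_succ_eq.mpr ha
          exact ⟨Sum.inr (Sum.inl i'), congrArg Sum.inr (Subtype.ext hE.symm)⟩
        · obtain ⟨j', rfl⟩ := Fin.exists_succ_eq.mpr hb
          exact ⟨Sum.inr (Sum.inr j'), congrArg Sum.inr (Subtype.ext hE.symm)⟩
        · exfalso
          have := ub7 E ha hb hE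
          omega
        · exfalso
          have := ub8 E ha hb hE
          omega
    have h1 : S.ncard ≤ (Set.range (bigF n m)).ncard :=
      Set.ncard_le_ncard hSsub (Set.toFinite _)
    rw [bigF_card, hScard] at h1
    omega

end MDegAux

theorem mDegree_totalGraph_boxProd_star_large (n m : ℕ) (hm : 3 ≤ m) (hmn : m ≤ n)
    (h : 2 * (m - 1) < n) :
    IsGreatest (mDegreeSet (totalGraph ((_root_.starGraph n).boxProd (_root_.starGraph m)))) (2 * m + n + 1) :=
  MDegAux.main n m hm hmn h
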